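/- arXiv:2004.02167 — 3 statements merged into one kernel-verified Lean document; each statement's English description precedes it below -/
import Mathlib

section
/- Let Δ > 0 and p > 0, set μ = Δ/(Δ + p), and let (I_k)_{k≥1} be i.i.d. Bernoulli(μ) random variables with Î_k = Σ_{j=1}^k I_j. Let (α_k)_{k≥1} be positive reals with α_k/k → 0 and log(k/α_k)/k → 0 as k → ∞. Define x_k = p·Î_k/(k + α_k − Î_k). Then there exist a constant C > 0 and an index K such that for all k ≥ K, E|x_k − Δ| ≤ C·max{k^{−1/2}, α_k/k}. -/
set_option maxHeartbeats 1000000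

section AuxLLN
open MeasureTheory ProbabilityTheory Filter Real

lemma exists_chernoff_param (μ ε : ℝ) (hε : 0 < ε) :
    ∃ t > 0, ∃ c > 0, μ * (Real.exp t - 1) - t * (μ + ε) ≤ -c := by
  set f : ℝ → ℝ := fun t => t * (μ + ε) - μ * (Real.exp t - 1) with hf
  have hderiv : HasDerivAt f ε 0 := by
    have h1 : HasDerivAt (fun t : ℝ => t * (μ + ε)) (μ + ε) 0 := by
      simpa using (hasDerivAt_id (0:ℝ)).mul_const (μ + ε)
    have h2 : HasDerivAt (fun t : ℝ => μ * (Real.exp t - 1)) (μ * 1) 0 := by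
      simpa using ((Real.hasDerivAt_exp 0).sub_const 1).const_mul μ
    have := h1.sub h2
    exact this.congr_deriv (show μ + ε - μ * 1 = ε by ring)
  have hslope : Tendsto (slope f 0) (nhdsWithin 0 {(0:ℝ)}ᶜ) (nhds ε) :=
    hasDerivAt_iff_tendsto_slope.mp hderiv
  have hev : ∀ᶠ t in nhdsWithin 0 {(0:ℝ)}ᶜ, ε/2 < slope f 0 t :=
    hslope.eventually_const_lt (by linarith)
  have hev' : ∀ᶠ t in nhdsWithin (0:ℝ) (Set.Ioi 0), ε/2 < slope f 0 t :=
    hev.filter_mono (nhdsWithin_mono 0 (fun y hy => ne_of_gt hy))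
  obtain ⟨t, ht, hts⟩ := (hev'.and self_mem_nhdsWithin).exists
  refine ⟨t, hts, t * ε / 2, by positivity, ?_⟩
  have h0 : f 0 = 0 := by simp [hf]
  have : slope f 0 t = f t / t := by simp [slope_def_field, h0]
  rw [this] at ht
  have hft : t * ε / 2 ≤ f t := by
    have h2 := (lt_div_iff₀ hts).mp ht
    nlinarith
  simp only [hf] at hft
  linarith

section
variable {Ω : Type*} [MeasurableSpace Ω] {P : Measure Ω} [IsProbabilityMeasure P]

lemma bern_mem01 {Y : Ω → ℝ} (hvals : ∀ ω, Y ω = 0 ∨ Y ω = 1) (ω : Ω) :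
    Y ω ∈ Set.Icc (0:ℝ) 1 := by rcases hvals ω with h | h <;> simp [h]

lemma bern_memℒp {Y : Ω → ℝ} (hm : Measurable Y) (hvals : ∀ ω, Y ω = 0 ∨ Y ω = 1) (q : ENNReal) :
    MemLp Y q P :=
  memLp_of_bounded (Filter.Eventually.of_forall (bern_mem01 hvals)) hm.aestronglyMeasurable q

lemma bern_integrable {Y : Ω → ℝ} (hm : Measurable Y) (hvals : ∀ ω, Y ω = 0 ∨ Y ω = 1) :
    Integrable Y P := (bern_memℒp hm hvals 1).integrable le_rfl

lemma bern_integral {μ : ℝ} (hμ0 : 0 ≤ μ) {Y : Ω → ℝ} (hm : Measurable Y)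
    (hvals : ∀ ω, Y ω = 0 ∨ Y ω = 1) (hber : P {ω | Y ω = 1} = ENNReal.ofReal μ) :
    ∫ ω, Y ω ∂P = μ := by
  have hset : MeasurableSet {ω | Y ω = 1} := hm (measurableSet_singleton 1)
  have heq : Y = Set.indicator {ω | Y ω = 1} (fun _ => (1:ℝ)) := by
    funext ω
    rcases hvals ω with h | h
    · rw [h, Set.indicator_of_notMem]
      simp [Set.mem_setOf_eq, h]
    · rw [h, Set.indicator_of_mem]
      exact h
  rw [heq, integral_indicator hset]
  simp [measureReal_def, hber, ENNReal.toReal_ofReal hμ0]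

lemma bern_mgf {μ : ℝ} (hμ0 : 0 ≤ μ) {Y : Ω → ℝ} (hm : Measurable Y)
    (hvals : ∀ ω, Y ω = 0 ∨ Y ω = 1) (hber : P {ω | Y ω = 1} = ENNReal.ofReal μ) (t : ℝ) :
    mgf Y P t = 1 + μ * (Real.exp t - 1) := by
  have hpt : (fun ω => Real.exp (t * Y ω)) = fun ω => 1 + (Real.exp t - 1) * Y ω := by
    funext ω
    rcases hvals ω with h | h <;> simp [h]
  rw [mgf, hpt]
  rw [integral_add (integrable_const 1) ((bern_integrable hm hvals).const_mul _)]
  rw [integral_const_mul, bern_integral hμ0 hm hvals hber]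
  simp [mul_comm]

lemma bern_integrable_exp {Y : Ω → ℝ} (hm : Measurable Y)
    (hvals : ∀ ω, Y ω = 0 ∨ Y ω = 1) (t : ℝ) :
    Integrable (fun ω => Real.exp (t * Y ω)) P := by
  have hpt : (fun ω => Real.exp (t * Y ω)) = fun ω => 1 + (Real.exp t - 1) * Y ω := by
    funext ω
    rcases hvals ω with h | h <;> simp [h]
  rw [hpt]
  exact (integrable_const 1).add ((bern_integrable hm hvals).const_mul _)

variable {μ : ℝ} {I : ℕ → Ω → ℝ}

section sums
variable (hmeas : ∀ k, Measurable (I k))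
  (hvals : ∀ k ω, I k ω = 0 ∨ I k ω = 1)
  (hber : ∀ k, P {ω | I k ω = 1} = ENNReal.ofReal μ)
  (hμ0 : 0 ≤ μ) (k : ℕ)
include hmeas hvals in
lemma sum_meas : Measurable (∑ j ∈ Finset.Icc 1 k, I j) := by
  have h : (∑ j ∈ Finset.Icc 1 k, I j) = fun ω => ∑ j ∈ Finset.Icc 1 k, I j ω := by
    funext ω; simp
  rw [h]
  exact Finset.measurable_sum _ fun j _ => hmeas j

include hvals in
lemma sum_bounds (ω : Ω) : (∑ j ∈ Finset.Icc 1 k, I j) ω ∈ Set.Icc (0:ℝ) k := by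
  constructor
  · simp only [Finset.sum_apply]
    exact Finset.sum_nonneg fun j _ => (bern_mem01 (hvals j) ω).1
  · simp only [Finset.sum_apply]
    calc ∑ j ∈ Finset.Icc 1 k, I j ω ≤ ∑ j ∈ Finset.Icc 1 k, 1 :=
      Finset.sum_le_sum fun j _ => (bern_mem01 (hvals j) ω).2
    _ = k := by simp

include hmeas hvals in
lemma sum_memℒp (q : ENNReal) : MemLp (∑ j ∈ Finset.Icc 1 k, I j) q P :=
  memLp_of_bounded (Filter.Eventually.of_forall (sum_bounds hvals k))
    (sum_meas hmeas hvals k).aestronglyMeasurable q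

include hmeas hvals hber hμ0 in
lemma sum_integral : ∫ ω, (∑ j ∈ Finset.Icc 1 k, I j) ω ∂P = k * μ := by
  simp only [Finset.sum_apply]
  rw [integral_finset_sum _ fun j _ => bern_integrable (hmeas j) (hvals j)]
  rw [Finset.sum_congr rfl fun j _ => bern_integral hμ0 (hmeas j) (hvals j) (hber j)]
  simp

include hmeas hvals hber hμ0 in
lemma sum_variance (hμ1 : μ ≤ 1)
    (hindep : iIndepFun I P) :
    variance (∑ j ∈ Finset.Icc 1 k, I j) P ≤ k / 4 := by
  rw [IndepFun.variance_sum (fun j _ => bern_memℒp (hmeas j) (hvals j) 2)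
    (fun i _ j _ hij => hindep.indepFun hij)]
  calc ∑ j ∈ Finset.Icc 1 k, variance (I j) P
      ≤ ∑ _j ∈ Finset.Icc 1 k, ((1-0)/2:ℝ)^2 :=
        Finset.sum_le_sum fun j _ => variance_le_sq_of_bounded
          (Filter.Eventually.of_forall (bern_mem01 (hvals j))) (hmeas j).aemeasurable
    _ = k / 4 := by
        simp only [Finset.sum_const, Nat.card_Icc, smul_eq_mul]
        ring_nf
        norm_num

include hmeas hvals hber hμ0 in
lemma sum_meandev (hμ1 : μ ≤ 1)
    (hindep : iIndepFun I P) :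
    ∫ ω, |(∑ j ∈ Finset.Icc 1 k, I j) ω - k * μ| ∂P ≤ Real.sqrt k / 2 := by
  set S := ∑ j ∈ Finset.Icc 1 k, I j with hS
  have hSm : Measurable S := sum_meas hmeas hvals k
  have hS2 : MemLp S 2 P := sum_memℒp hmeas hvals k 2
  have hY2 : MemLp (fun ω => S ω - k * μ) 2 P := by
    have := hS2.sub (memLp_const (k * μ))
    simpa [Pi.sub_def] using this
  have habs2 : MemLp (fun ω => |S ω - k * μ|) 2 P := by
    have := hY2.abs
    simpa [Pi.abs_def] using this
  have hvar0 := variance_nonneg (fun ω => |S ω - k * μ|) P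
  rw [variance_eq_sub habs2] at hvar0
  have hsq : (∫ ω, |S ω - k * μ| ∂P) ^ 2 ≤ ∫ ω, (S ω - k * μ) ^ 2 ∂P := by
    simpa using hvar0
  have hvareq : ∫ ω, (S ω - k * μ) ^ 2 ∂P = variance S P := by
    have h := variance_eq_integral hS2.aemeasurable
    rw [sum_integral hmeas hvals hber hμ0 k] at h
    rw [h]
  have hvar := sum_variance hmeas hvals hber hμ0 k hμ1 hindep
  rw [hvareq] at hsq
  have hnn : 0 ≤ ∫ ω, |S ω - k * μ| ∂P := integral_nonneg fun ω => abs_nonneg _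
  have hle : (∫ ω, |S ω - k * μ| ∂P) ^ 2 ≤ (Real.sqrt k / 2) ^ 2 := by
    have : (Real.sqrt k / 2) ^ 2 = (k:ℝ) / 4 := by
      rw [div_pow, Real.sq_sqrt (Nat.cast_nonneg k)]; ring
    rw [this]; exact hsq.trans hvar
  calc ∫ ω, |S ω - k * μ| ∂P = Real.sqrt ((∫ ω, |S ω - k * μ| ∂P) ^ 2) :=
        (Real.sqrt_sq hnn).symm
    _ ≤ Real.sqrt ((Real.sqrt k / 2) ^ 2) := Real.sqrt_le_sqrt hle
    _ = Real.sqrt k / 2 := Real.sqrt_sq (by positivity)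

include hmeas hvals hber hμ0 in
lemma sum_chernoff (hindep : iIndepFun I P)
    {t : ℝ} (ht : 0 < t) (a : ℝ) :
    (P {ω | a ≤ (∑ j ∈ Finset.Icc 1 k, I j) ω}).toReal ≤
      Real.exp (-t * a + k * (μ * (Real.exp t - 1))) := by
  have hint : ∀ j ∈ Finset.Icc 1 k, Integrable (fun ω => Real.exp (t * I j ω)) P :=
    fun j _ => bern_integrable_exp (hmeas j) (hvals j) t
  have hC := measure_ge_le_exp_mul_mgf (X := ∑ j ∈ Finset.Icc 1 k, I j) (μ := P) a ht.le
    (hindep.integrable_exp_mul_sum (fun j => hmeas j) hint)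
  have hmgf : mgf (∑ j ∈ Finset.Icc 1 k, I j) P t ≤ Real.exp (k * (μ * (Real.exp t - 1))) := by
    rw [hindep.mgf_sum (fun j => hmeas j)]
    calc ∏ j ∈ Finset.Icc 1 k, mgf (I j) P t
        = ∏ _j ∈ Finset.Icc 1 k, (1 + μ * (Real.exp t - 1)) :=
          Finset.prod_congr rfl fun j _ => bern_mgf hμ0 (hmeas j) (hvals j) (hber j) t
      _ = (1 + μ * (Real.exp t - 1)) ^ k := by
          simp [Finset.prod_const, Nat.card_Icc]
      _ ≤ Real.exp (μ * (Real.exp t - 1)) ^ k := by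
          have he : (0:ℝ) ≤ 1 + μ * (Real.exp t - 1) := by
            have := Real.one_le_exp ht.le
            nlinarith
          exact pow_le_pow_left₀ he (by rw [add_comm]; exact Real.add_one_le_exp _) k
      _ = Real.exp (k * (μ * (Real.exp t - 1))) := by
          rw [← Real.exp_nat_mul]
  calc (P {ω | a ≤ (∑ j ∈ Finset.Icc 1 k, I j) ω}).toReal
      ≤ Real.exp (-t * a) * mgf (∑ j ∈ Finset.Icc 1 k, I j) P t := hC
    _ ≤ Real.exp (-t * a) * Real.exp (k * (μ * (Real.exp t - 1))) := by
        apply mul_le_mul_of_nonneg_left hmgf (Real.exp_nonneg _)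
    _ = Real.exp (-t * a + k * (μ * (Real.exp t - 1))) := (Real.exp_add _ _).symm

end sums
end

open MeasureTheory ProbabilityTheory Filter


end AuxLLN

open MeasureTheory ProbabilityTheory Filter

/-- convergence rate of the LLN estimator. If additionally
`log (k / α_k) / k → 0`, then eventually `E|x_k - Δ| ≤ C max (k^{-1/2}) (α_k / k)`. -/
theorem lln_estimator_rate
    {Ω : Type*} [MeasurableSpace Ω] (P : Measure Ω) [IsProbabilityMeasure P]
    (Δ p : ℝ) (hΔ : 0 < Δ) (hp : 0 < p)
    (μ : ℝ) (hμ : μ = Δ / (Δ + p))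
    (I : ℕ → Ω → ℝ) (hmeas : ∀ k, Measurable (I k))
    (hvals : ∀ k ω, I k ω = 0 ∨ I k ω = 1)
    (hber : ∀ k, P {ω | I k ω = 1} = ENNReal.ofReal μ)
    (hindep : iIndepFun I P)
    (α : ℕ → ℝ) (hα : ∀ k, 0 < α k)
    (hαk : Tendsto (fun k : ℕ => α k / k) atTop (nhds 0))
    (hlog : Tendsto (fun k : ℕ => Real.log (k / α k) / k) atTop (nhds 0))
    (x : ℕ → Ω → ℝ)
    (hx : ∀ k ω, x k ω =
      p * (∑ j ∈ Finset.Icc 1 k, I j ω) / (k + α k - ∑ j ∈ Finset.Icc 1 k, I j ω)) :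
    ∃ C > 0, ∃ K : ℕ, ∀ k ≥ K,
      ∫ ω, |x k ω - Δ| ∂P ≤ C * max ((k : ℝ) ^ (-(1/2 : ℝ))) (α k / k) := by
  have hΔp : 0 < Δ + p := by linarith
  have hμ0 : 0 < μ := by rw [hμ]; positivity
  have hμ1 : μ < 1 := by rw [hμ, div_lt_one hΔp]; linarith
  have h1μ : 0 < 1 - μ := by linarith
  set ε := (1 - μ) / 2 with hεdef
  have hε0 : 0 < ε := by positivity
  obtain ⟨t, ht0, c, hc0, hkey⟩ := exists_chernoff_param μ ε hε0
  set C1 := 2 * p / ((1 - μ) ^ 2) with hC1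
  have hC1pos : 0 < C1 := by positivity
  have hΔeq : Δ = p * μ / (1 - μ) := by
    rw [hμ]
    rw [show (1 : ℝ) - Δ / (Δ + p) = p / (Δ + p) by field_simp; ring]
    field_simp
  -- the per-k bound
  have main : ∀ k : ℕ, 1 ≤ k →
      ∫ ω, |x k ω - Δ| ∂P ≤
        C1 * (Real.sqrt k / 2 + α k) / k + (p * k / α k + Δ) * Real.exp (-(c * k)) := by
    intro k hk1
    set S := ∑ j ∈ Finset.Icc 1 k, I j with hSdef
    have hSm : Measurable S := sum_meas hmeas hvals k
    have hkR : (0:ℝ) < k := by exact_mod_cast hk1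
    have hak := hα k
    have hSb : ∀ ω, S ω ∈ Set.Icc (0:ℝ) k := sum_bounds hvals k
    have hD : ∀ ω, 0 < (k:ℝ) + α k - S ω := fun ω => by have := (hSb ω).2; linarith
    have hxS : ∀ ω, x k ω = p * S ω / ((k:ℝ) + α k - S ω) := by
      intro ω; rw [hx k ω]; simp [hSdef]
    have hx0 : ∀ ω, 0 ≤ x k ω := fun ω => by
      rw [hxS ω]; exact div_nonneg (mul_nonneg hp.le (hSb ω).1) (hD ω).le
    have hxU : ∀ ω, x k ω ≤ p * k / α k := fun ω => by
      rw [hxS ω]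
      have h0S := (hSb ω).1
      have h2S := (hSb ω).2
      exact div_le_div₀ (by positivity) (mul_le_mul_of_nonneg_left h2S hp.le) hak
        (by linarith)
    have hpk0 : 0 ≤ p * k / α k := by positivity
    have habs : ∀ ω, |x k ω - Δ| ≤ p * k / α k + Δ := fun ω =>
      abs_le.mpr ⟨by linarith [hx0 ω], by linarith [hxU ω]⟩
    set B := {ω | (μ + ε) * k ≤ S ω} with hBdef
    have hBm : MeasurableSet B := measurableSet_le measurable_const hSm
    have hgood : ∀ ω, ω ∉ B → |x k ω - Δ| ≤ C1 * (|S ω - μ * k| + α k) / k := by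
      intro ω hω
      have hSω : S ω < (μ + ε) * k := by
        simpa [hBdef] using hω
      have hDlb : (1 - μ) / 2 * k ≤ (k:ℝ) + α k - S ω := by
        have hme : (μ + ε) = (1 + μ) / 2 := by rw [hεdef]; ring
        rw [hme] at hSω
        nlinarith
      have hDpos := hD ω
      have hxdiff : x k ω - Δ =
          p * (S ω - μ * k - μ * α k) / ((1 - μ) * ((k:ℝ) + α k - S ω)) := by
        rw [hxS ω, hΔeq]
        field_simp
        ring
      rw [hxdiff, abs_div, abs_of_pos (by positivity : 0 < (1 - μ) * ((k:ℝ) + α k - S ω))]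
      have hnum : |p * (S ω - μ * k - μ * α k)| ≤ p * (|S ω - μ * k| + α k) := by
        rw [abs_mul, abs_of_pos hp]
        have h2 := abs_sub (S ω - μ * k) (μ * α k)
        have h3 : |μ * α k| = μ * α k := abs_of_nonneg (by positivity)
        have h4 : μ * α k ≤ α k := by nlinarith
        have : |S ω - μ * k - μ * α k| ≤ |S ω - μ * k| + α k := by
          rw [h3] at h2; linarith
        exact mul_le_mul_of_nonneg_left this hp.le
      have hX0 : 0 ≤ |S ω - μ * k| + α k := by positivity
      have hCeq : C1 * (|S ω - μ * k| + α k) / k =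
          p * (|S ω - μ * k| + α k) / ((1 - μ) * ((1 - μ) / 2 * k)) := by
        rw [hC1]; field_simp
      rw [hCeq]
      calc |p * (S ω - μ * k - μ * α k)| / ((1 - μ) * ((k:ℝ) + α k - S ω))
          ≤ p * (|S ω - μ * k| + α k) / ((1 - μ) * ((k:ℝ) + α k - S ω)) := by
            gcongr
        _ ≤ p * (|S ω - μ * k| + α k) / ((1 - μ) * ((1 - μ) / 2 * k)) := by
            gcongr
    have hpt : ∀ ω, |x k ω - Δ| ≤
        C1 / k * (|S ω - μ * k| + α k) + Set.indicator B (fun _ => p * k / α k + Δ) ω := by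
      intro ω
      by_cases hω : ω ∈ B
      · rw [Set.indicator_of_mem hω]
        have h1 : 0 ≤ C1 / k * (|S ω - μ * k| + α k) := by positivity
        linarith [habs ω]
      · rw [Set.indicator_of_notMem hω]
        have := hgood ω hω
        have heq : C1 * (|S ω - μ * k| + α k) / k = C1 / k * (|S ω - μ * k| + α k) := by ring
        rw [heq] at this
        linarith
    have hxm : Measurable (fun ω => |x k ω - Δ|) := by
      have hxk : Measurable (x k) := by
        have hfe : x k = fun ω => p * S ω / ((k:ℝ) + α k - S ω) := funext hxS
        rw [hfe]
        exact (hSm.const_mul p).div (measurable_const.sub hSm)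
      exact (hxk.sub measurable_const).abs
    have hint1 : Integrable (fun ω => |x k ω - Δ|) P := by
      refine (integrable_const (p * k / α k + Δ)).mono' hxm.aestronglyMeasurable ?_
      exact Filter.Eventually.of_forall fun ω => by
        rw [Real.norm_eq_abs, abs_abs]; exact habs ω
    have hintS : Integrable (fun ω => |S ω - μ * k|) P := by
      refine (integrable_const ((k:ℝ) + μ * k)).mono'
        ((hSm.sub measurable_const).abs).aestronglyMeasurable ?_
      refine Filter.Eventually.of_forall fun ω => ?_
      rw [Real.norm_eq_abs, abs_abs]
      have h1 := (hSb ω).1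
      have h2 := (hSb ω).2
      rw [abs_sub_le_iff]
      constructor <;> nlinarith
    have hint2a : Integrable (fun ω => C1 / k * (|S ω - μ * k| + α k)) P :=
      ((hintS.add (integrable_const _)).const_mul _)
    have hint2b : Integrable (Set.indicator B (fun _ => p * k / α k + Δ)) P :=
      (integrable_const _).indicator hBm
    have hIle : ∫ ω, |x k ω - Δ| ∂P ≤ ∫ ω, (C1 / k * (|S ω - μ * k| + α k)
        + Set.indicator B (fun _ => p * k / α k + Δ) ω) ∂P :=
      integral_mono hint1 (hint2a.add hint2b) hpt
    rw [integral_add hint2a hint2b, integral_indicator_const _ hBm, integral_const_mul,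
      integral_add hintS (integrable_const _), integral_const] at hIle
    simp only [measureReal_def, measure_univ, ENNReal.toReal_one, one_smul, smul_eq_mul, one_mul] at hIle
    -- bound the two terms
    have hdev : ∫ ω, |S ω - μ * k| ∂P ≤ Real.sqrt k / 2 := by
      have := sum_meandev hmeas hvals hber hμ0.le k hμ1.le hindep
      have heq : (fun ω => |S ω - μ * k|) = fun ω => |S ω - (k:ℝ) * μ| := by
        funext ω; rw [mul_comm]
      rw [heq]
      exact this
    have hcher : (P B).toReal ≤ Real.exp (-(c * k)) := by
      have := sum_chernoff hmeas hvals hber hμ0.le k hindep ht0 ((μ + ε) * k)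
      refine this.trans (Real.exp_le_exp.mpr ?_)
      have hkey' : (k:ℝ) * (μ * (Real.exp t - 1) - t * (μ + ε)) ≤ (k:ℝ) * (-c) :=
        mul_le_mul_of_nonneg_left hkey (by positivity)
      nlinarith
    have hterm2 : (P B).toReal * (p * k / α k + Δ) ≤
        Real.exp (-(c * k)) * (p * k / α k + Δ) :=
      mul_le_mul_of_nonneg_right hcher (by positivity)
    calc ∫ ω, |x k ω - Δ| ∂P
        ≤ C1 / k * ((∫ ω, |S ω - μ * k| ∂P) + α k) + (P B).toReal * (p * k / α k + Δ) :=
          hIle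
      _ ≤ C1 / k * (Real.sqrt k / 2 + α k) + Real.exp (-(c * k)) * (p * k / α k + Δ) := by
          have h1 : C1 / k * ((∫ ω, |S ω - μ * k| ∂P) + α k) ≤
              C1 / k * (Real.sqrt k / 2 + α k) := by
            apply mul_le_mul_of_nonneg_left (by linarith) (by positivity)
          linarith
      _ = C1 * (Real.sqrt k / 2 + α k) / k + (p * k / α k + Δ) * Real.exp (-(c * k)) := by
          ring
  -- eventual facts
  have hev1 : ∀ᶠ k : ℕ in atTop, α k / k < 1 := hαk.eventually_lt_const one_pos
  have hev2 : ∀ᶠ k : ℕ in atTop, Real.log (k / α k) / k < c / 2 :=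
    hlog.eventually_lt_const (by positivity)
  have hg : Tendsto (fun k : ℕ => (Real.log (p + Δ) + 1 / 2 * Real.log k) / k) atTop
      (nhds 0) := by
    have h1 : Tendsto (fun k : ℕ => Real.log (p + Δ) / k) atTop (nhds 0) :=
      tendsto_const_div_atTop_nhds_zero_nat _
    have h2 : Tendsto (fun k : ℕ => Real.log k / k) atTop (nhds 0) :=
      (Real.isLittleO_log_id_atTop.tendsto_div_nhds_zero).comp tendsto_natCast_atTop_atTop
    have h3 := h1.add (h2.const_mul (1 / 2))
    simp only [mul_zero, add_zero, zero_add] at h3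
    refine h3.congr fun k => ?_
    ring
  have hev3 : ∀ᶠ k : ℕ in atTop, (Real.log (p + Δ) + 1 / 2 * Real.log k) / k < c / 2 :=
    hg.eventually_lt_const (by positivity)
  obtain ⟨K0, hK0⟩ := eventually_atTop.mp ((hev1.and hev2).and hev3)
  refine ⟨C1 / 2 + C1 + 1, by positivity, max K0 1, ?_⟩
  intro k hk
  have hk1 : 1 ≤ k := le_trans (le_max_right _ _) hk
  obtain ⟨⟨h1, h2⟩, h3⟩ := hK0 k (le_trans (le_max_left _ _) hk)
  have hkR : (0 : ℝ) < k := by exact_mod_cast hk1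
  have hak := hα k
  set A := (k : ℝ) ^ (-(1 / 2 : ℝ)) with hA
  have hA0 : 0 < A := by rw [hA]; positivity
  -- tail bound
  have htail : (p * k / α k + Δ) * Real.exp (-(c * k)) ≤ A := by
    have hka : (1 : ℝ) ≤ k / α k := by
      rw [le_div_iff₀ hak]
      have := (div_lt_one hkR).mp h1
      linarith
    have hb1 : p * k / α k + Δ ≤ (p + Δ) * (k / α k) := by
      have he : p * k / α k = p * (k / α k) := by ring
      rw [he]
      nlinarith
    have hlogk : Real.log (k / α k) ≤ c / 2 * k := by
      have := (div_lt_iff₀ hkR).mp h2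
      linarith
    have hexp : (k : ℝ) / α k = Real.exp (Real.log (k / α k)) :=
      (Real.exp_log (by positivity)).symm
    have hlogpd : Real.log (p + Δ) + 1 / 2 * Real.log k ≤ c / 2 * k := by
      have := (div_lt_iff₀ hkR).mp h3
      linarith
    calc (p * k / α k + Δ) * Real.exp (-(c * k))
        ≤ (p + Δ) * (k / α k) * Real.exp (-(c * k)) := by
          exact mul_le_mul_of_nonneg_right hb1 (Real.exp_nonneg _)
      _ = (p + Δ) * Real.exp (Real.log (k / α k) - c * k) := by
          rw [Real.exp_sub, ← hexp, Real.exp_neg]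
          ring
      _ = Real.exp (Real.log (p + Δ) + (Real.log (k / α k) - c * k)) := by
          rw [Real.exp_add, Real.exp_log (by positivity)]
      _ ≤ Real.exp (-(1 / 2) * Real.log k) := by
          apply Real.exp_le_exp.mpr
          linarith
      _ = A := by
          rw [hA, Real.rpow_def_of_pos hkR]
          ring_nf
  have hsqk : Real.sqrt k / 2 / k = A / 2 := by
    rw [hA, Real.sqrt_eq_rpow]
    rw [show ((k:ℝ) ^ (1/2 : ℝ) / 2 / k) = (k:ℝ) ^ (1/2 : ℝ) / (k:ℝ) ^ (1 : ℝ) / 2 by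
      rw [Real.rpow_one]; ring]
    rw [← Real.rpow_sub hkR]
    norm_num
  have hmain2 : C1 * (Real.sqrt k / 2 + α k) / k = C1 / 2 * (Real.sqrt k / 2 / k * 2)
      + C1 * (α k / k) := by ring
  have hle := main k hk1
  have hAm : A ≤ max A (α k / k) := le_max_left _ _
  have hBm : α k / k ≤ max A (α k / k) := le_max_right _ _
  calc ∫ ω, |x k ω - Δ| ∂P
      ≤ C1 * (Real.sqrt k / 2 + α k) / k + (p * k / α k + Δ) * Real.exp (-(c * k)) := hle
    _ ≤ (C1 / 2 * A + C1 * (α k / k)) + A := by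
        rw [hmain2, hsqk]
        have : A / 2 * 2 = A := by ring
        rw [this]
        linarith
    _ ≤ (C1 / 2 + C1 + 1) * max A (α k / k) := by nlinarith
end

section
/- Let Δ > 0 and p > 0, set μ = Δ/(Δ + p), and let (I_k)_{k≥1} be i.i.d. Bernoulli(μ) random variables. Let (η_k)_{k≥0} be a sequence of positive reals with Σ_{k≥0} η_k = ∞ and Σ_{k≥0} η_k² < ∞. Let y_0 ∈ ℝ be arbitrary and define recursively y_{k+1} = y_k + η_k·(I_{k+1}·(y_k + p) − y_k) for k ≥ 0. Then y_k → Δ almost surely as k → ∞. -/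
open MeasureTheory ProbabilityTheory Filter
open scoped NNReal ENNReal

lemma sa_det (Δ p : ℝ) (hΔ : 0 < Δ) (hp : 0 < p) (μ : ℝ) (hμ : μ = Δ / (Δ + p))
    (η : ℕ → ℝ) (hη : ∀ k, 0 < η k)
    (hηsum : Tendsto (fun n => ∑ k ∈ Finset.range n, η k) atTop atTop)
    (hη0 : Tendsto η atTop (nhds 0))
    (a : ℕ → ℝ) (ha : ∀ k, a k = 0 ∨ a k = 1)
    (y : ℕ → ℝ) (hy : ∀ k, y (k + 1) = y k + η k * (a (k + 1) * (y k + p) - y k))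
    (L : ℝ)
    (hL : Tendsto (fun n => ∑ k ∈ Finset.range n, η k * (a (k + 1) - μ)) atTop (nhds L)) :
    Tendsto y atTop (nhds Δ) := by
  have hΔp : (0:ℝ) < Δ + p := by linarith
  have hΔpne : (Δ + p) ≠ 0 := ne_of_gt hΔp
  set c : ℝ := p / (Δ + p) with hc
  have hcpos : 0 < c := div_pos hp hΔp
  have hcμ : c + μ = 1 := by rw [hc, hμ]; field_simp; ring
  set S : ℕ → ℝ := fun n => ∑ k ∈ Finset.range n, η k * (a (k + 1) - μ) with hSdef
  set T : ℕ → ℝ := fun n => L - S n with hTdef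
  have hT0 : Tendsto T atTop (nhds 0) := by
    have h := tendsto_const_nhds (x := L) (f := atTop (α := ℕ)) |>.sub hL
    simpa using h
  set d : ℕ → ℝ := fun k => η k * (c - (a (k + 1) - μ)) with hddef
  set z : ℕ → ℝ := fun k => y k - Δ + (Δ + p) * T k with hzdef
  -- key recursion
  have hrec : ∀ k, z (k + 1) = (1 - d k) * z k + d k * ((Δ + p) * T k) := by
    intro k
    have hSk : S (k + 1) = S k + η k * (a (k + 1) - μ) := Finset.sum_range_succ _ _
    simp only [hzdef, hTdef, hSk, hy k, hddef, hc, hμ]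
    field_simp
    ring
  -- d k ∈ {0, η k}
  have hd01 : ∀ k, d k = 0 ∨ d k = η k := by
    intro k
    rcases ha (k + 1) with h | h
    · right; simp only [hddef, h]; rw [show c - (0 - μ) = 1 by linarith]; ring
    · left; simp only [hddef, h]; rw [show c - (1 - μ) = 0 by linarith]; ring
  have hd0 : ∀ k, 0 ≤ d k := by
    intro k; rcases hd01 k with h | h <;> simp [h, (hη k).le]
  have hdle : ∀ k, d k ≤ η k := by
    intro k; rcases hd01 k with h | h <;> simp [h, (hη k).le]
  -- divergence of ∑ d
  have hdiv : Tendsto (fun n => ∑ k ∈ Finset.range n, d k) atTop atTop := by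
    have heq : ∀ n, ∑ k ∈ Finset.range n, d k
        = c * (∑ k ∈ Finset.range n, η k) + (- S n) := by
      intro n
      rw [Finset.mul_sum, hSdef, ← Finset.sum_neg_distrib, ← Finset.sum_add_distrib]
      refine Finset.sum_congr rfl fun k _ => by simp only [hddef]; ring
    have h1 : Tendsto (fun n => c * ∑ k ∈ Finset.range n, η k) atTop atTop :=
      hηsum.const_mul_atTop hcpos
    have h2 : Tendsto (fun n => c * (∑ k ∈ Finset.range n, η k) + (- S n)) atTop atTop :=
      h1.atTop_add hL.neg
    exact h2.congr fun n => (heq n).symm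
  have hTc : Tendsto (fun n => (Δ + p) * T n) atTop (nhds 0) := by
    have := hT0.const_mul (Δ + p); simpa using this
  -- core: z → 0
  have hz0 : Tendsto z atTop (nhds 0) := by
    rw [NormedAddCommGroup.tendsto_nhds_zero]
    intro ε hε
    have e1 : ∀ᶠ n in atTop, η n < 1 := hη0.eventually_lt_const (by norm_num)
    have e2 : ∀ᶠ n in atTop, |(Δ + p) * T n| < ε / 2 :=
      hTc.abs.eventually_lt_const (by simpa using half_pos hε)
    obtain ⟨N, hN⟩ := (e1.and e2).exists_forall_of_atTop
    set w : ℕ → ℝ := fun n => max (|z n| - ε / 2) 0 with hwdef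
    have hwnonneg : ∀ n, 0 ≤ w n := fun n => le_max_right _ _
    have hwstep : ∀ n, N ≤ n → w (n + 1) ≤ (1 - d n) * w n := by
      intro n hn
      have hβ0 : 0 ≤ 1 - d n := by
        have h1 := hdle n
        have h2 := (hN n hn).1
        linarith
      have hzb : |z (n + 1)| ≤ (1 - d n) * |z n| + d n * (ε / 2) := by
        rw [hrec n]
        calc |(1 - d n) * z n + d n * ((Δ + p) * T n)|
            ≤ |(1 - d n) * z n| + |d n * ((Δ + p) * T n)| := abs_add_le _ _
          _ = (1 - d n) * |z n| + d n * |(Δ + p) * T n| := by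
              rw [abs_mul, abs_mul, abs_of_nonneg hβ0, abs_of_nonneg (hd0 n)]
          _ ≤ (1 - d n) * |z n| + d n * (ε / 2) := by
              have h2 := (hN n hn).2
              nlinarith [hd0 n]
      apply max_le
      · have h1 : |z n| - ε / 2 ≤ w n := le_max_left _ _
        nlinarith [hd0 n, hwnonneg n]
      · exact mul_nonneg hβ0 (hwnonneg n)
    have hwbound : ∀ n, N ≤ n →
        w n ≤ w N * Real.exp (-(∑ k ∈ Finset.Ico N n, d k)) := by
      intro n hn
      induction n, hn using Nat.le_induction with
      | base => simp
      | succ n hn ih =>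
        have h2 : (1 - d n) ≤ Real.exp (-(d n)) := by
          have := Real.add_one_le_exp (-(d n)); linarith
        calc w (n + 1) ≤ (1 - d n) * w n := hwstep n hn
          _ ≤ Real.exp (-(d n)) * w n := mul_le_mul_of_nonneg_right h2 (hwnonneg n)
          _ ≤ Real.exp (-(d n)) * (w N * Real.exp (-(∑ k ∈ Finset.Ico N n, d k))) :=
              mul_le_mul_of_nonneg_left ih (Real.exp_nonneg _)
          _ = w N * Real.exp (-(∑ k ∈ Finset.Ico N (n + 1), d k)) := by
              rw [Finset.sum_Ico_succ_top hn, neg_add, Real.exp_add]; ring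
    have hsumIco : Tendsto (fun n => ∑ k ∈ Finset.Ico N n, d k) atTop atTop := by
      have heq : ∀ᶠ n in atTop, ∑ k ∈ Finset.range n, d k - ∑ k ∈ Finset.range N, d k
          = ∑ k ∈ Finset.Ico N n, d k := by
        filter_upwards [eventually_ge_atTop N] with n hn
        rw [Finset.sum_Ico_eq_sub _ hn]
      exact (tendsto_atTop_add_const_right _ (-(∑ k ∈ Finset.range N, d k)) hdiv).congr'
        (by filter_upwards [heq] with n hn using by simpa [sub_eq_add_neg] using hn)
    have hexp : Tendsto (fun n => w N * Real.exp (-(∑ k ∈ Finset.Ico N n, d k)))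
        atTop (nhds 0) := by
      have h1 : Tendsto (fun n => -(∑ k ∈ Finset.Ico N n, d k)) atTop atBot :=
        tendsto_neg_atTop_atBot.comp hsumIco
      have h2 := Real.tendsto_exp_atBot.comp h1
      have h3 := h2.const_mul (w N)
      simpa using h3
    have hev : ∀ᶠ n in atTop, w n < ε / 2 := by
      filter_upwards [eventually_ge_atTop N, hexp.eventually_lt_const (half_pos hε)]
        with n hn hlt
      exact lt_of_le_of_lt (hwbound n hn) hlt
    filter_upwards [hev] with n hn
    have h1 : |z n| - ε / 2 ≤ w n := le_max_left _ _
    have : |z n| < ε := by linarith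
    simpa [Real.norm_eq_abs] using this
  -- conclude
  have hyz : ∀ k, y k = z k - (Δ + p) * T k + Δ := by
    intro k; simp only [hzdef]; ring
  have := (hz0.sub hTc).add_const Δ
  simp only [sub_zero, zero_sub] at this
  refine Tendsto.congr (fun k => (hyz k).symm) ?_
  simpa using this


/-- almost-sure convergence of the SA estimator
`y_{k+1} = y_k + η_k (I_{k+1} (y_k + p) - y_k)` to `Δ`, where the `I_k` are i.i.d.
Bernoulli with parameter `μ = Δ/(Δ+p)` and `η_k > 0`, `∑ η_k = ∞`, `∑ η_k² < ∞`. -/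
theorem sa_estimator_converges_ae
    {Ω : Type*} [MeasurableSpace Ω] (P : Measure Ω) [IsProbabilityMeasure P]
    (Δ p : ℝ) (hΔ : 0 < Δ) (hp : 0 < p)
    (μ : ℝ) (hμ : μ = Δ / (Δ + p))
    (I : ℕ → Ω → ℝ) (hmeas : ∀ k, Measurable (I k))
    (hvals : ∀ k ω, I k ω = 0 ∨ I k ω = 1)
    (hber : ∀ k, P {ω | I k ω = 1} = ENNReal.ofReal μ)
    (hindep : iIndepFun I P)
    (η : ℕ → ℝ) (hη : ∀ k, 0 < η k)
    (hη1 : ¬ Summable η) (hη2 : Summable (fun k => (η k) ^ 2))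
    (y : ℕ → Ω → ℝ) (y0 : ℝ) (hy0 : ∀ ω, y 0 ω = y0)
    (hy : ∀ k ω, y (k + 1) ω = y k ω + η k * (I (k + 1) ω * (y k ω + p) - y k ω)) :
    ∀ᵐ ω ∂P, Tendsto (fun k => y k ω) atTop (nhds Δ) := by
  have hΔp : (0:ℝ) < Δ + p := by linarith
  have hμ0 : 0 ≤ μ := by rw [hμ]; positivity
  have hμ1 : μ ≤ 1 := by rw [hμ, div_le_one hΔp]; linarith
  have hsm : ∀ k, StronglyMeasurable (I k) := fun k => (hmeas k).stronglyMeasurable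
  set ℱ := MeasureTheory.Filtration.natural I hsm with hℱ
  set X : ℕ → Ω → ℝ := fun k ω => η k * (I (k + 1) ω - μ) with hX
  set f : ℕ → Ω → ℝ := fun n => ∑ k ∈ Finset.range n, X k with hf
  have hfapp : ∀ n ω, f n ω = ∑ k ∈ Finset.range n, η k * (I (k + 1) ω - μ) := by
    intro n ω; rw [hf]; simp [hX]
  -- boundedness and integrability
  have hIb : ∀ k ω, |I k ω| ≤ 1 := by
    intro k ω; rcases hvals k ω with h | h <;> simp [h]
  have hImem : ∀ k, MemLp (I k) 2 P := fun k =>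
    MemLp.of_bound (hsm k).aestronglyMeasurable 1
      (Filter.Eventually.of_forall fun ω => by simpa [Real.norm_eq_abs] using hIb k ω)
  have hXmem : ∀ k, MemLp (X k) 2 P := by
    intro k
    have h := ((hImem (k + 1)).sub (memLp_const μ)).const_mul (η k)
    have : (fun ω => η k * ((I (k + 1)) ω - (fun _ : Ω => μ) ω)) = X k := by
      funext ω; simp [hX]
    simpa [this] using h
  have hXint : ∀ k, Integrable (X k) P := fun k => (hXmem k).integrable one_le_two
  have hfmem : ∀ n, MemLp (f n) 2 P := fun n => memLp_finset_sum' _ fun k _ => hXmem k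
  have hfint : ∀ n, Integrable (f n) P := fun n => (hfmem n).integrable one_le_two
  -- expectation of I k is μ
  have hIexp : ∀ k, ∫ ω, I k ω ∂P = μ := by
    intro k
    have hA : MeasurableSet {ω | I k ω = 1} := hmeas k (measurableSet_singleton 1)
    have hind : I k = Set.indicator {ω | I k ω = 1} (fun _ => (1:ℝ)) := by
      funext ω
      by_cases hmem : I k ω = 1
      · simp [Set.indicator, hmem]
      · have h0 : I k ω = 0 := (hvals k ω).resolve_right hmem
        simp [Set.indicator, hmem, h0]
    rw [hind, integral_indicator_const _ hA, measureReal_def, hber k, smul_eq_mul, mul_one,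
      ENNReal.toReal_ofReal hμ0]
  have hXexp : ∀ k, ∫ ω, X k ω ∂P = 0 := by
    intro k
    have h1 : Integrable (I (k + 1)) P := (hImem (k + 1)).integrable one_le_two
    simp only [hX]
    rw [integral_const_mul, integral_sub h1 (integrable_const μ)]
    simp [hIexp (k + 1)]
  -- adaptedness
  have hadp : StronglyAdapted ℱ f := by
    intro n
    refine Finset.stronglyMeasurable_sum _ fun k hk => ?_
    have h1 : StronglyMeasurable[ℱ (k + 1)] (I (k + 1)) :=
      MeasureTheory.Filtration.stronglyAdapted_natural hsm (k + 1)
    have h2 : StronglyMeasurable[ℱ n] (I (k + 1)) :=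
      h1.mono (ℱ.mono (Finset.mem_range.1 hk))
    exact (h2.sub stronglyMeasurable_const).const_mul (η k)
  -- martingale property
  have hcX : ∀ i, P[X i | ℱ i] =ᵐ[P] 0 := by
    intro i
    have hIi : Integrable (I (i + 1)) P := (hImem (i + 1)).integrable one_le_two
    have e0 : X i = η i • ((I (i + 1)) - (fun _ : Ω => μ)) := by
      funext ω; simp [hX, smul_eq_mul]
    have e1 : P[X i | ℱ i] =ᵐ[P] η i • P[(I (i + 1)) - (fun _ : Ω => μ) | ℱ i] := by
      rw [e0]; exact condExp_smul (η i) _ _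
    have e2 : P[(I (i + 1)) - (fun _ : Ω => μ) | ℱ i]
        =ᵐ[P] P[I (i + 1) | ℱ i] - P[(fun _ : Ω => μ) | ℱ i] :=
      condExp_sub hIi (integrable_const μ) _
    have e3 : P[I (i + 1) | ℱ i] =ᵐ[P] fun _ => μ := by
      have h := hindep.condExp_natural_ae_eq_of_lt hsm (Nat.lt_succ_self i)
      refine h.trans ?_
      have : (fun _ : Ω => ∫ ω, I (i + 1) ω ∂P) = fun _ : Ω => μ := by
        funext _; rw [hIexp (i + 1)]
      rw [this]
    have e4 : P[(fun _ : Ω => μ) | ℱ i] = fun _ => μ := condExp_const (ℱ.le i) μ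
    refine e1.trans ?_
    filter_upwards [e2, e3] with ω h2 h3
    simp only [Pi.smul_apply, Pi.zero_apply, smul_eq_mul]
    rw [h2]
    simp [h3, e4]
  have hmart : Martingale f ℱ P := by
    refine martingale_nat hadp hfint fun i => ?_
    have hsucc : f (i + 1) = f i + X i := Finset.sum_range_succ _ _
    have h1 : P[f (i + 1) | ℱ i] =ᵐ[P] P[f i | ℱ i] + P[X i | ℱ i] := by
      rw [hsucc]; exact condExp_add (hfint i) (hXint i) _
    have h2 : P[f i | ℱ i] = f i :=
      condExp_of_stronglyMeasurable (ℱ.le i) (hadp i) (hfint i)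
    refine (h1.trans ?_).symm
    rw [h2]
    filter_upwards [hcX i] with ω hω
    simp [hω]
  -- variance bounds
  set V : ℝ := ∑' k, (η k) ^ 2 with hV
  have hV0 : 0 ≤ V := tsum_nonneg fun k => sq_nonneg _
  have hvarX : ∀ k, variance (X k) P ≤ η k ^ 2 := by
    intro k
    have h1 : variance (X k) P ≤ ∫ ω, (X k ω) ^ 2 ∂P := by
      have := variance_le_expectation_sq (μ := P) (hXmem k).aestronglyMeasurable
      simpa using this
    have h2 : ∀ ω, (X k ω) ^ 2 ≤ η k ^ 2 := by
      intro ω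
      have hb : |I (k + 1) ω - μ| ≤ 1 := by
        rcases hvals (k + 1) ω with h | h <;> rw [h, abs_le] <;> constructor <;> linarith
      have habs : |X k ω| ≤ |η k| := by
        rw [hX]
        simp only [abs_mul]
        calc |η k| * |I (k + 1) ω - μ| ≤ |η k| * 1 :=
              mul_le_mul_of_nonneg_left hb (abs_nonneg _)
          _ = |η k| := mul_one _
      calc (X k ω) ^ 2 = |X k ω| ^ 2 := (sq_abs _).symm
        _ ≤ |η k| ^ 2 := by nlinarith [abs_nonneg (X k ω)]
        _ = η k ^ 2 := sq_abs _
    have h3 : ∫ ω, (X k ω) ^ 2 ∂P ≤ ∫ _ω, η k ^ 2 ∂P :=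
      integral_mono ((hXmem k).integrable_sq) (integrable_const _) h2
    rw [integral_const] at h3
    simp only [probReal_univ, smul_eq_mul, one_mul] at h3
    linarith
  have hEf : ∀ n, ∫ ω, f n ω ∂P = 0 := by
    intro n
    have h1 : ∫ ω, f n ω ∂P = ∑ k ∈ Finset.range n, ∫ ω, X k ω ∂P := by
      calc ∫ ω, f n ω ∂P = ∫ ω, ∑ k ∈ Finset.range n, X k ω ∂P :=
            integral_congr_ae (Filter.Eventually.of_forall fun ω => by rw [hf]; simp)
        _ = ∑ k ∈ Finset.range n, ∫ ω, X k ω ∂P := integral_finset_sum _ fun k _ => hXint k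
    rw [h1]
    simp [hXexp]
  have hvarf : ∀ n, variance (f n) P ≤ V := by
    intro n
    have hps : Set.Pairwise ↑(Finset.range n) fun i j => IndepFun (X i) (X j) P := by
      intro i _ j _ hij
      have h := hindep.indepFun (show i + 1 ≠ j + 1 by omega)
      have hφ : Measurable fun x : ℝ => η i * (x - μ) :=
        (measurable_id.sub_const μ).const_mul (η i)
      have hψ : Measurable fun x : ℝ => η j * (x - μ) :=
        (measurable_id.sub_const μ).const_mul (η j)
      exact h.comp hφ hψ
    have hsum := IndepFun.variance_sum (μ := P) (fun k _ => hXmem k) hps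
    calc variance (f n) P = ∑ k ∈ Finset.range n, variance (X k) P := by rw [hf, hsum]
      _ ≤ ∑ k ∈ Finset.range n, η k ^ 2 := Finset.sum_le_sum fun k _ => hvarX k
      _ ≤ V := hη2.sum_le_tsum _ (fun k _ => sq_nonneg _)
  -- L¹ bound
  set R : ℝ≥0 := (Real.sqrt V).toNNReal with hR
  have hbdd : ∀ n, eLpNorm (f n) 1 P ≤ (R : ℝ≥0∞) := by
    intro n
    have h12 : eLpNorm (f n) 1 P ≤ eLpNorm (f n) 2 P :=
      eLpNorm_le_eLpNorm_of_exponent_le (by norm_num) (hfmem n).aestronglyMeasurable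
    have hev : evariance (f n) P = ∫⁻ ω, ‖f n ω‖ₑ ^ 2 ∂P := by
      rw [evariance]
      have : P[f n] = 0 := hEf n
      simp [this]
    have h2 : eLpNorm (f n) 2 P = (evariance (f n) P) ^ (1/2 : ℝ) := by
      rw [eLpNorm_eq_lintegral_rpow_enorm_toReal two_ne_zero ENNReal.ofNat_ne_top, hev]
      norm_num [ENNReal.rpow_two]
    have h3 : evariance (f n) P ≤ ENNReal.ofReal V := by
      rw [← (hfmem n).ofReal_variance_eq]
      exact ENNReal.ofReal_le_ofReal (hvarf n)
    calc eLpNorm (f n) 1 P ≤ eLpNorm (f n) 2 P := h12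
      _ = (evariance (f n) P) ^ (1/2 : ℝ) := h2
      _ ≤ (ENNReal.ofReal V) ^ (1/2 : ℝ) := ENNReal.rpow_le_rpow h3 (by norm_num)
      _ = ENNReal.ofReal (V ^ (1/2 : ℝ)) :=
          ENNReal.ofReal_rpow_of_nonneg hV0 (by norm_num)
      _ = (R : ℝ≥0∞) := by
          rw [hR, ← Real.sqrt_eq_rpow]
          rfl
  have hae := (hmart.submartingale.exists_ae_tendsto_of_bdd hbdd)
  -- deterministic conditions
  have hηsum : Tendsto (fun n => ∑ k ∈ Finset.range n, η k) atTop atTop :=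
    (not_summable_iff_tendsto_nat_atTop_of_nonneg fun k => (hη k).le).1 hη1
  have hη0 : Tendsto η atTop (nhds 0) := by
    have h1 : Tendsto (fun k => (η k) ^ 2) atTop (nhds 0) := hη2.tendsto_atTop_zero
    have h2 := (Real.continuous_sqrt.tendsto 0).comp h1
    rw [Real.sqrt_zero] at h2
    exact h2.congr fun k => Real.sqrt_sq (hη k).le
  filter_upwards [hae] with ω hω
  obtain ⟨L, hL⟩ := hω
  refine sa_det Δ p hΔ hp μ hμ η hη hηsum hη0 (fun k => I k ω) (fun k => hvals k ω)
    (fun k => y k ω) (fun k => hy k ω) L ?_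
  have : (fun n => ∑ k ∈ Finset.range n, η k * (I (k + 1) ω - μ)) = fun n => f n ω := by
    funext n; rw [hfapp]
  rw [this]
  exact hL
end

section
/- Let μ ∈ (0,1) and let (I_k)_{k≥1} be i.i.d. Bernoulli(μ) random variables with empirical mean Ī_k = (Σ_{j=1}^k I_j)/k. Let (ᾱ_k) be positive reals with ᾱ_k → 0 and log(1/ᾱ_k)/k → 0, and set δ_k = √(6·log(1/ᾱ_k)/(k·μ)). Then E[ |Ī_k − μ|/(ᾱ_k + 1 − Ī_k) ] → 0 as k → ∞. -/
open MeasureTheory ProbabilityTheory Filter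

/-- for i.i.d. Bernoulli(μ) variables with empirical means `Ī_k`, and
positive reals `ᾱ_k` with `ᾱ_k → 0` and `log(1/ᾱ_k)/k → 0` (with
`δ_k = √(6 log(1/ᾱ_k)/(k μ))` in the proof), one has
`E[|Ī_k - μ|/(ᾱ_k + 1 - Ī_k)] → 0` as `k → ∞`. -/
theorem lln_A_term_vanishes
    {Ω : Type*} [MeasurableSpace Ω] (P : Measure Ω) [IsProbabilityMeasure P]
    (μ : ℝ) (hμ : μ ∈ Set.Ioo (0 : ℝ) 1)
    (I : ℕ → Ω → ℝ) (hmeas : ∀ k, Measurable (I k))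
    (hvals : ∀ k ω, I k ω = 0 ∨ I k ω = 1)
    (hber : ∀ k, P {ω | I k ω = 1} = ENNReal.ofReal μ)
    (hindep : iIndepFun I P)
    (Ibar : ℕ → Ω → ℝ)
    (hIbar : ∀ k ω, Ibar k ω = (∑ j ∈ Finset.Icc 1 k, I j ω) / k)
    (α : ℕ → ℝ) (hα : ∀ k, 0 < α k)
    (hα0 : Tendsto α atTop (nhds 0))
    (hαlog : Tendsto (fun k : ℕ => Real.log (1 / α k) / k) atTop (nhds 0))
    (δ : ℕ → ℝ)
    (hδ : ∀ k, δ k = Real.sqrt (6 * Real.log (1 / α k) / (k * μ))) :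
    Tendsto (fun k : ℕ => ∫ ω, |Ibar k ω - μ| / (α k + 1 - Ibar k ω) ∂P)
      atTop (nhds 0) := by
  obtain ⟨hμ0, hμ1⟩ := hμ
  set ε : ℝ := (1 - μ) / 2 with hε_def
  have hε : 0 < ε := by simp only [hε_def]; linarith
  set t : ℝ := min 1 (ε / (2 * μ)) with ht_def
  have ht0 : 0 < t := lt_min one_pos (by positivity)
  have ht1 : t ≤ 1 := min_le_left _ _
  have htε : μ * t ^ 2 ≤ t * ε / 2 := by
    have h2 : t ≤ ε / (2 * μ) := min_le_right _ _
    have h3 : t * (2 * μ) ≤ ε := by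
      rw [← le_div_iff₀ (by positivity)]; exact h2
    nlinarith [ht0.le]
  -- pointwise facts about I
  have hI0 : ∀ j ω, 0 ≤ I j ω := fun j ω => by
    rcases hvals j ω with h | h <;> rw [h] <;> norm_num
  have hI1 : ∀ j ω, I j ω ≤ 1 := fun j ω => by
    rcases hvals j ω with h | h <;> rw [h] <;> norm_num
  -- membership in L²
  have memI2 : ∀ j, MemLp (I j) 2 P := fun j =>
    MemLp.of_bound (hmeas j).aestronglyMeasurable 1
      (ae_of_all _ fun ω => by
        rw [Real.norm_eq_abs, abs_le]; exact ⟨by linarith [hI0 j ω], hI1 j ω⟩)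
  have hInt : ∀ j, Integrable (I j) P := fun j => (memI2 j).integrable one_le_two
  -- expectation of I j
  have hEI : ∀ j, ∫ ω, I j ω ∂P = μ := by
    intro j
    have hset : MeasurableSet {ω | I j ω = 1} := by
      have : {ω | I j ω = 1} = I j ⁻¹' {1} := rfl
      rw [this]; exact (hmeas j) (measurableSet_singleton 1)
    have hrep : (fun ω => I j ω)
        = Set.indicator {ω | I j ω = 1} (fun _ => (1 : ℝ)) := by
      funext ω
      rcases hvals j ω with h | h
      · rw [h, Set.indicator_of_notMem]
        simp only [Set.mem_setOf_eq, h]; norm_num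
      · rw [h, Set.indicator_of_mem]
        exact h
    rw [hrep, integral_indicator_const (1 : ℝ) hset, measureReal_def, hber j, smul_eq_mul, mul_one,
      ENNReal.toReal_ofReal hμ0.le]
  -- linear integrals
  have hlin : ∀ (j : ℕ) (a b : ℝ), ∫ ω, (a + b * I j ω) ∂P = a + b * μ := by
    intro j a b
    rw [integral_add (integrable_const a) ((hInt j).const_mul b), integral_const,
      integral_const_mul, hEI j]
    simp
  -- variance of I j
  have varI : ∀ j, variance (I j) P = μ - μ ^ 2 := by
    intro j
    rw [variance_eq_sub (memI2 j)]
    have h1 : P[(I j) ^ 2] = μ := by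
      have : ∀ ω, ((I j) ^ 2) ω = I j ω := fun ω => by
        rcases hvals j ω with h | h <;> simp [h]
      calc P[(I j) ^ 2] = ∫ ω, I j ω ∂P := by
            exact integral_congr_ae (ae_of_all _ this)
        _ = μ := hEI j
    rw [h1, hEI j]
  -- measurability of Ibar
  have hIbar_eq : ∀ k, Ibar k = (k : ℝ)⁻¹ • (∑ j ∈ Finset.Icc 1 k, I j) := by
    intro k
    funext ω
    rw [hIbar k ω, Pi.smul_apply, smul_eq_mul, Finset.sum_apply, div_eq_inv_mul]
  have hmIbar : ∀ k, Measurable (Ibar k) := by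
    intro k
    have h : Ibar k = fun ω => (∑ j ∈ Finset.Icc 1 k, I j ω) / k := funext (hIbar k)
    rw [h]
    exact (Finset.measurable_sum _ fun j _ => hmeas j).div_const _
  -- Ibar in [0,1]
  have hIbar0 : ∀ k ω, 0 ≤ Ibar k ω := by
    intro k ω
    rw [hIbar k ω]
    exact div_nonneg (Finset.sum_nonneg fun j _ => hI0 j ω) (Nat.cast_nonneg k)
  have hIbar1 : ∀ k ω, Ibar k ω ≤ 1 := by
    intro k ω
    rw [hIbar k ω]
    apply div_le_one_of_le₀
    · calc (∑ j ∈ Finset.Icc 1 k, I j ω) ≤ ∑ j ∈ Finset.Icc 1 k, (1 : ℝ) :=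
            Finset.sum_le_sum fun j _ => hI1 j ω
        _ = (k : ℝ) := by simp [Nat.card_Icc]
    · exact Nat.cast_nonneg k
  have memIbar2 : ∀ k, MemLp (Ibar k) 2 P := fun k =>
    MemLp.of_bound (hmIbar k).aestronglyMeasurable 1
      (ae_of_all _ fun ω => by
        rw [Real.norm_eq_abs, abs_le]; exact ⟨by linarith [hIbar0 k ω], hIbar1 k ω⟩)
  have hIntIbar : ∀ k, Integrable (Ibar k) P := fun k => (memIbar2 k).integrable one_le_two
  -- variance of the sum
  have hSmem : ∀ k, MemLp (∑ j ∈ Finset.Icc 1 k, I j) 2 P := fun k =>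
    memLp_finset_sum' _ fun j _ => memI2 j
  have varS : ∀ k, variance (∑ j ∈ Finset.Icc 1 k, I j) P = (k : ℝ) * (μ - μ ^ 2) := by
    intro k
    rw [IndepFun.variance_sum (fun j _ => memI2 j)
      (fun i _ j _ hij => hindep.indepFun hij)]
    simp [varI, Nat.card_Icc, mul_comm]
    ring
  -- expectation of the sum
  have ESk : ∀ k, ∫ ω, (∑ j ∈ Finset.Icc 1 k, I j) ω ∂P = (k : ℝ) * μ := by
    intro k
    simp only [Finset.sum_apply]
    rw [integral_finset_sum _ fun j _ => hInt j]
    simp [hEI, Nat.card_Icc, mul_comm]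
  -- expectation and variance of Ibar for k ≥ 1
  have EIbar : ∀ k : ℕ, 1 ≤ k → ∫ ω, Ibar k ω ∂P = μ := by
    intro k hk
    have hk0 : (k : ℝ) ≠ 0 := Nat.cast_ne_zero.mpr (by omega)
    rw [hIbar_eq k]
    simp only [Pi.smul_apply, smul_eq_mul]
    rw [integral_const_mul, ESk k]
    field_simp
  have varIbar : ∀ k : ℕ, 1 ≤ k → variance (Ibar k) P = (μ - μ ^ 2) / k := by
    intro k hk
    have hk0 : (k : ℝ) ≠ 0 := Nat.cast_ne_zero.mpr (by omega)
    rw [hIbar_eq k, variance_smul, varS k]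
    field_simp
  -- L¹ bound via variance (Cauchy–Schwarz)
  have hL1 : ∀ k : ℕ, 1 ≤ k →
      ∫ ω, |Ibar k ω - μ| ∂P ≤ Real.sqrt ((μ - μ ^ 2) / k) := by
    intro k hk
    have hYmem : MemLp (fun ω => Ibar k ω - μ) 2 P := (memIbar2 k).sub (memLp_const μ)
    have hAmem : MemLp (fun ω => |Ibar k ω - μ|) 2 P := hYmem.abs
    have hnn := variance_nonneg (fun ω => |Ibar k ω - μ|) P
    rw [variance_eq_sub hAmem] at hnn
    have hsq : P[(fun ω => |Ibar k ω - μ|) ^ 2] = ∫ ω, (Ibar k ω - μ) ^ 2 ∂P := by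
      apply integral_congr_ae (ae_of_all _ _)
      intro ω
      simp [sq_abs]
    have hEabs : P[fun ω => |Ibar k ω - μ|] = ∫ ω, |Ibar k ω - μ| ∂P := rfl
    have hY2 : ∫ ω, (Ibar k ω - μ) ^ 2 ∂P = variance (Ibar k) P := by
      rw [variance_eq_integral (hmIbar k).aemeasurable, EIbar k hk]
    apply Real.le_sqrt_of_sq_le
    rw [← varIbar k hk, ← hY2, ← hsq]
    nlinarith [hnn]
  -- mgf of I j
  have hmgfI : ∀ j, mgf (I j) P t = 1 + (Real.exp t - 1) * μ := by
    intro j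
    have : mgf (I j) P t = ∫ ω, Real.exp (t * I j ω) ∂P := rfl
    rw [this]
    have hrep : ∀ ω, Real.exp (t * I j ω) = 1 + (Real.exp t - 1) * I j ω := by
      intro ω
      rcases hvals j ω with h | h <;> rw [h] <;> simp
    calc ∫ ω, Real.exp (t * I j ω) ∂P
        = ∫ ω, (1 + (Real.exp t - 1) * I j ω) ∂P :=
          integral_congr_ae (ae_of_all _ hrep)
      _ = 1 + (Real.exp t - 1) * μ := hlin j 1 (Real.exp t - 1)
  -- exp t ≤ 1 + t + t^2
  have hexpt : Real.exp t ≤ 1 + t + t ^ 2 := by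
    have h := Real.exp_bound' ht0.le ht1 (n := 2) (by norm_num)
    simp only [Finset.sum_range_succ, Finset.sum_range_zero] at h
    norm_num at h
    nlinarith [sq_nonneg t]
  have hB : 1 + (Real.exp t - 1) * μ ≤ Real.exp (μ * (t + t ^ 2)) := by
    have h1 : (Real.exp t - 1) * μ ≤ (t + t ^ 2) * μ := by
      apply mul_le_mul_of_nonneg_right _ hμ0.le
      linarith
    calc 1 + (Real.exp t - 1) * μ ≤ 1 + (t + t ^ 2) * μ := by linarith
      _ ≤ Real.exp ((t + t ^ 2) * μ) := by
          have := Real.add_one_le_exp ((t + t ^ 2) * μ)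
          linarith
      _ = Real.exp (μ * (t + t ^ 2)) := by ring_nf
  have hB0 : (0 : ℝ) ≤ 1 + (Real.exp t - 1) * μ := by
    have := Real.one_le_exp ht0.le
    nlinarith
  -- Chernoff bound
  have hchern : ∀ k : ℕ,
      (P {ω | (k : ℝ) * (μ + ε) ≤ (∑ j ∈ Finset.Icc 1 k, I j) ω}).toReal
        ≤ Real.exp ((k : ℝ) * (-(t * ε / 2))) := by
    intro k
    have hbound : ∀ ω, (∑ j ∈ Finset.Icc 1 k, I j) ω ≤ (k : ℝ) := by
      intro ω
      rw [Finset.sum_apply]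
      calc (∑ j ∈ Finset.Icc 1 k, I j ω) ≤ ∑ j ∈ Finset.Icc 1 k, (1 : ℝ) :=
            Finset.sum_le_sum fun j _ => hI1 j ω
        _ = (k : ℝ) := by simp [Nat.card_Icc]
    have hbound0 : ∀ ω, 0 ≤ (∑ j ∈ Finset.Icc 1 k, I j) ω := by
      intro ω
      rw [Finset.sum_apply]
      exact Finset.sum_nonneg fun j _ => hI0 j ω
    have hintexp : Integrable (fun ω => Real.exp (t * (∑ j ∈ Finset.Icc 1 k, I j) ω)) P := by
      have hmm : MemLp (fun ω => Real.exp (t * (∑ j ∈ Finset.Icc 1 k, I j) ω)) 1 P := by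
        refine MemLp.of_bound ?_ (Real.exp (t * k)) ?_
        · have hms : Measurable fun ω => (∑ j ∈ Finset.Icc 1 k, I j) ω := by
            simp only [Finset.sum_apply]
            exact Finset.measurable_sum _ fun j _ => hmeas j
          exact (hms.const_mul t).exp.aestronglyMeasurable
        · exact ae_of_all _ fun ω => by
            rw [Real.norm_eq_abs, Real.abs_exp]
            exact Real.exp_le_exp.mpr (mul_le_mul_of_nonneg_left (hbound ω) ht0.le)
      exact hmm.integrable le_rfl
    have h1 := measure_ge_le_exp_mul_mgf (μ := P) (X := ∑ j ∈ Finset.Icc 1 k, I j)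
      ((k : ℝ) * (μ + ε)) ht0.le hintexp
    have hmgfS : mgf (∑ j ∈ Finset.Icc 1 k, I j) P t = (1 + (Real.exp t - 1) * μ) ^ k := by
      rw [hindep.mgf_sum hmeas (Finset.Icc 1 k)]
      rw [Finset.prod_congr rfl fun j _ => hmgfI j, Finset.prod_const, Nat.card_Icc]
      norm_num
    rw [hmgfS] at h1
    refine h1.trans ?_
    calc Real.exp (-t * ((k : ℝ) * (μ + ε))) * (1 + (Real.exp t - 1) * μ) ^ k
        ≤ Real.exp (-t * ((k : ℝ) * (μ + ε))) * (Real.exp (μ * (t + t ^ 2))) ^ k := by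
          apply mul_le_mul_of_nonneg_left _ (Real.exp_nonneg _)
          exact pow_le_pow_left₀ hB0 hB k
      _ = Real.exp (-t * ((k : ℝ) * (μ + ε)) + (k : ℝ) * (μ * (t + t ^ 2))) := by
          rw [← Real.exp_nat_mul, ← Real.exp_add]
      _ ≤ Real.exp ((k : ℝ) * (-(t * ε / 2))) := by
          apply Real.exp_le_exp.mpr
          have hk0 : (0 : ℝ) ≤ (k : ℝ) := Nat.cast_nonneg k
          have : -t * (μ + ε) + μ * (t + t ^ 2) ≤ -(t * ε / 2) := by nlinarith
          nlinarith
  -- the master pointwise bound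
  have hpt : ∀ k ω, |Ibar k ω - μ| / (α k + 1 - Ibar k ω)
      ≤ (2 / (1 - μ)) * |Ibar k ω - μ|
        + Set.indicator {ω' | μ + ε ≤ Ibar k ω'} (fun _ => (α k)⁻¹) ω := by
    intro k ω
    have hx0 := hIbar0 k ω
    have hx1 := hIbar1 k ω
    have hαk := hα k
    have hd : 0 < α k + 1 - Ibar k ω := by linarith
    have habs : |Ibar k ω - μ| ≤ 1 := by
      rw [abs_le]; constructor <;> linarith
    by_cases hcase : μ + ε ≤ Ibar k ω
    · have h1 : |Ibar k ω - μ| / (α k + 1 - Ibar k ω) ≤ (α k)⁻¹ := by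
        rw [div_le_iff₀ hd]
        calc |Ibar k ω - μ| ≤ 1 := habs
          _ = (α k)⁻¹ * α k := by rw [inv_mul_cancel₀ (ne_of_gt hαk)]
          _ ≤ (α k)⁻¹ * (α k + 1 - Ibar k ω) := by
              apply mul_le_mul_of_nonneg_left _ (inv_nonneg.mpr hαk.le)
              linarith
      rw [Set.indicator_of_mem (show ω ∈ {ω' | μ + ε ≤ Ibar k ω'} from hcase)]
      have h2 : 0 ≤ (2 / (1 - μ)) * |Ibar k ω - μ| := by
        apply mul_nonneg _ (abs_nonneg _)
        apply div_nonneg (by norm_num)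
        linarith
      linarith
    · push_neg at hcase
      rw [Set.indicator_of_notMem (by exact fun h => absurd h (not_le.mpr hcase))]
      have hd2 : (1 - μ) / 2 ≤ α k + 1 - Ibar k ω := by
        simp only [hε_def] at hcase
        linarith
      have h1 : |Ibar k ω - μ| / (α k + 1 - Ibar k ω) ≤ |Ibar k ω - μ| / ((1 - μ) / 2) := by
        apply div_le_div_of_nonneg_left (abs_nonneg _) _ hd2
        linarith
      have h2 : |Ibar k ω - μ| / ((1 - μ) / 2) = (2 / (1 - μ)) * |Ibar k ω - μ| := by
        field_simp
      linarith [h1, h2.le]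
  -- integrability facts
  have hfnn : ∀ k ω, 0 ≤ |Ibar k ω - μ| / (α k + 1 - Ibar k ω) := by
    intro k ω
    apply div_nonneg (abs_nonneg _)
    have := hIbar1 k ω
    linarith [hα k]
  have hfint : ∀ k, Integrable (fun ω => |Ibar k ω - μ| / (α k + 1 - Ibar k ω)) P := by
    intro k
    have hmm : MemLp (fun ω => |Ibar k ω - μ| / (α k + 1 - Ibar k ω)) 1 P := by
      refine MemLp.of_bound ?_ ((α k)⁻¹) ?_
      · exact (((hmIbar k).sub_const μ).abs.div
          ((measurable_const.add measurable_const).sub (hmIbar k))).aestronglyMeasurable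
      apply ae_of_all _ fun ω => ?_
      rw [Real.norm_eq_abs, abs_of_nonneg (hfnn k ω)]
      have hx0 := hIbar0 k ω
      have hx1 := hIbar1 k ω
      have hαk := hα k
      have hd : 0 < α k + 1 - Ibar k ω := by linarith
      rw [div_le_iff₀ hd]
      calc |Ibar k ω - μ| ≤ 1 := by rw [abs_le]; constructor <;> linarith
        _ = (α k)⁻¹ * α k := by rw [inv_mul_cancel₀ (ne_of_gt hαk)]
        _ ≤ (α k)⁻¹ * (α k + 1 - Ibar k ω) := by
            apply mul_le_mul_of_nonneg_left _ (inv_nonneg.mpr hαk.le)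
            linarith
    exact hmm.integrable le_rfl
  have hAset : ∀ k, MeasurableSet {ω | μ + ε ≤ Ibar k ω} := fun k =>
    measurableSet_le measurable_const (hmIbar k)
  have hg1int : ∀ k, Integrable (fun ω => (2 / (1 - μ)) * |Ibar k ω - μ|) P := fun k =>
    (((hIntIbar k).sub (integrable_const μ)).abs).const_mul _
  have hg2int : ∀ k, Integrable
      (Set.indicator {ω' | μ + ε ≤ Ibar k ω'} (fun _ => (α k)⁻¹)) P := fun k =>
    (integrable_const _).indicator (hAset k)
  -- master integral bound
  have hmaster : ∀ k : ℕ, 1 ≤ k →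
      ∫ ω, |Ibar k ω - μ| / (α k + 1 - Ibar k ω) ∂P
        ≤ (2 / (1 - μ)) * Real.sqrt ((μ - μ ^ 2) / k)
          + (α k)⁻¹ * Real.exp ((k : ℝ) * (-(t * ε / 2))) := by
    intro k hk
    have step1 : ∫ ω, |Ibar k ω - μ| / (α k + 1 - Ibar k ω) ∂P
        ≤ ∫ ω, ((2 / (1 - μ)) * |Ibar k ω - μ|
            + Set.indicator {ω' | μ + ε ≤ Ibar k ω'} (fun _ => (α k)⁻¹) ω) ∂P :=
      integral_mono (hfint k) ((hg1int k).add (hg2int k)) (hpt k)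
    have step2 : ∫ ω, ((2 / (1 - μ)) * |Ibar k ω - μ|
            + Set.indicator {ω' | μ + ε ≤ Ibar k ω'} (fun _ => (α k)⁻¹) ω) ∂P
        = (2 / (1 - μ)) * ∫ ω, |Ibar k ω - μ| ∂P
          + (P {ω' | μ + ε ≤ Ibar k ω'}).toReal * (α k)⁻¹ := by
      rw [integral_add (hg1int k) (hg2int k), integral_const_mul,
        integral_indicator_const _ (hAset k), smul_eq_mul, measureReal_def]
    have hsub : {ω' | μ + ε ≤ Ibar k ω'}
        ⊆ {ω | (k : ℝ) * (μ + ε) ≤ (∑ j ∈ Finset.Icc 1 k, I j) ω} := by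
      intro ω hω
      simp only [Set.mem_setOf_eq] at hω ⊢
      have hk0 : (0 : ℝ) < (k : ℝ) := by exact_mod_cast Nat.pos_of_ne_zero (by omega)
      rw [hIbar k ω] at hω
      rw [Finset.sum_apply]
      calc (k : ℝ) * (μ + ε) ≤ (k : ℝ) * ((∑ j ∈ Finset.Icc 1 k, I j ω) / k) :=
            mul_le_mul_of_nonneg_left hω hk0.le
        _ = ∑ j ∈ Finset.Icc 1 k, I j ω := by field_simp
    have hP : (P {ω' | μ + ε ≤ Ibar k ω'}).toReal
        ≤ Real.exp ((k : ℝ) * (-(t * ε / 2))) := by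
      refine le_trans ?_ (hchern k)
      exact ENNReal.toReal_mono (measure_ne_top _ _) (measure_mono hsub)
    calc ∫ ω, |Ibar k ω - μ| / (α k + 1 - Ibar k ω) ∂P
        ≤ (2 / (1 - μ)) * ∫ ω, |Ibar k ω - μ| ∂P
          + (P {ω' | μ + ε ≤ Ibar k ω'}).toReal * (α k)⁻¹ := by
          rw [← step2]; exact step1
      _ ≤ (2 / (1 - μ)) * Real.sqrt ((μ - μ ^ 2) / k)
          + (α k)⁻¹ * Real.exp ((k : ℝ) * (-(t * ε / 2))) := by
          have h1 : (2 / (1 - μ)) * ∫ ω, |Ibar k ω - μ| ∂P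
              ≤ (2 / (1 - μ)) * Real.sqrt ((μ - μ ^ 2) / k) := by
            apply mul_le_mul_of_nonneg_left (hL1 k hk)
            apply div_nonneg (by norm_num); linarith
          have h2 : (P {ω' | μ + ε ≤ Ibar k ω'}).toReal * (α k)⁻¹
              ≤ (α k)⁻¹ * Real.exp ((k : ℝ) * (-(t * ε / 2))) := by
            rw [mul_comm]
            exact mul_le_mul_of_nonneg_left hP (inv_nonneg.mpr (hα k).le)
          linarith
  -- rewrite the second term
  have hrw : ∀ k : ℕ, 1 ≤ k →
      (α k)⁻¹ * Real.exp ((k : ℝ) * (-(t * ε / 2)))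
        = Real.exp ((k : ℝ) * (Real.log (1 / α k) / k - t * ε / 2)) := by
    intro k hk
    have hk0 : (k : ℝ) ≠ 0 := Nat.cast_ne_zero.mpr (by omega)
    have h1 : (α k)⁻¹ = Real.exp (Real.log (1 / α k)) := by
      rw [Real.exp_log (one_div_pos.mpr (hα k)), one_div]
    rw [h1, ← Real.exp_add]
    congr 1
    field_simp
    ring
  -- the dominating sequence
  set g : ℕ → ℝ := fun k => (2 / (1 - μ)) * Real.sqrt ((μ - μ ^ 2) / k)
    + Real.exp ((k : ℝ) * (Real.log (1 / α k) / k - t * ε / 2)) with hg_def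
  have hgtendsto : Tendsto g atTop (nhds 0) := by
    have h1 : Tendsto (fun k : ℕ => (2 / (1 - μ)) * Real.sqrt ((μ - μ ^ 2) / k))
        atTop (nhds 0) := by
      have ha : Tendsto (fun k : ℕ => (μ - μ ^ 2) / (k : ℝ)) atTop (nhds 0) :=
        tendsto_const_div_atTop_nhds_zero_nat _
      have hb : Tendsto (fun k : ℕ => Real.sqrt ((μ - μ ^ 2) / k)) atTop (nhds 0) := by
        have := (Real.continuous_sqrt.tendsto 0).comp ha
        rwa [Real.sqrt_zero] at this
      have h := hb.const_mul (2 / (1 - μ))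
      rw [mul_zero] at h
      exact h
    have h2 : Tendsto (fun k : ℕ =>
        Real.exp ((k : ℝ) * (Real.log (1 / α k) / k - t * ε / 2))) atTop (nhds 0) := by
      have hinner : Tendsto (fun k : ℕ => (k : ℝ) * (Real.log (1 / α k) / k - t * ε / 2))
          atTop atBot := by
        apply Tendsto.atTop_mul_neg (C := -(t * ε / 2)) (by nlinarith)
          tendsto_natCast_atTop_atTop
        have := hαlog.sub (tendsto_const_nhds (x := t * ε / 2))
        simpa using this
      exact Real.tendsto_exp_atBot.comp hinner
    have h3 := h1.add h2
    rw [add_zero] at h3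
    exact h3
  -- conclude by squeezing
  have h0le : ∀ k : ℕ, 0 ≤ ∫ ω, |Ibar k ω - μ| / (α k + 1 - Ibar k ω) ∂P := fun k =>
    integral_nonneg (hfnn k)
  have hub : ∀ᶠ k : ℕ in atTop,
      ∫ ω, |Ibar k ω - μ| / (α k + 1 - Ibar k ω) ∂P ≤ g k := by
    filter_upwards [eventually_ge_atTop 1] with k hk
    calc ∫ ω, |Ibar k ω - μ| / (α k + 1 - Ibar k ω) ∂P
        ≤ (2 / (1 - μ)) * Real.sqrt ((μ - μ ^ 2) / k)
          + (α k)⁻¹ * Real.exp ((k : ℝ) * (-(t * ε / 2))) := hmaster k hk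
      _ = g k := by rw [hg_def]; simp only []; rw [hrw k hk]
  exact tendsto_of_tendsto_of_tendsto_of_le_of_le' tendsto_const_nhds hgtendsto
    (Eventually.of_forall h0le) hub
end
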